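/- arXiv:math/0111199 — 3 statements merged into one kernel-verified Lean document; each statement's English description precedes it below -/
import Mathlib

section
/- For real β with |β| ≤ 1 and any real α, ∫_{-∞}^{∞} Li_1(β e^{2iαx - x²}) dx = √π · Li_{3/2}(β e^{-α²}), where Li_1(z) = -log(1-z). -/
open Complex MeasureTheory

/-- The polylogarithm `Li ν z = ∑_{n ≥ 1} z^n / n^ν` (series definition). -/
noncomputable def Li (ν : ℂ) (z : ℂ) : ℂ := ∑' n : ℕ, z ^ (n + 1) / ((n : ℂ) + 1) ^ ν

/-- `Li₁ z = -log(1-z)`, principal branch. -/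
noncomputable def Li1 (z : ℂ) : ℂ := -Complex.log (1 - z)

noncomputable def Fterm (β α : ℝ) (n : ℕ) (x : ℝ) : ℂ :=
  (β : ℂ) ^ (n + 1) * Complex.exp (((n : ℂ) + 1) * (2 * Complex.I * α * x - x ^ 2)) / ((n : ℂ) + 1)

lemma Fterm_eq (β α : ℝ) (n : ℕ) (x : ℝ) :
    Fterm β α n x = ((β : ℂ) ^ (n + 1) / ((n : ℂ) + 1)) *
      Complex.exp ((-((n:ℂ)+1)) * x ^ 2 + (2 * Complex.I * α * ((n:ℂ)+1)) * x + 0) := by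
  unfold Fterm
  rw [div_mul_eq_mul_div]
  congr 2
  ring

lemma integrable_Fterm (β α : ℝ) (n : ℕ) : Integrable (Fterm β α n) := by
  have hb : (-((n:ℂ)+1)).re < 0 := by
    simp only [neg_re, add_re, natCast_re, one_re]
    have : (0:ℝ) ≤ (n:ℝ) := Nat.cast_nonneg n
    linarith
  have := (integrable_cexp_quadratic' hb (2 * Complex.I * α * ((n:ℂ)+1)) 0).const_mul
    ((β : ℂ) ^ (n + 1) / ((n : ℂ) + 1))
  have heq : Fterm β α n = fun x : ℝ => ((β : ℂ) ^ (n + 1) / ((n : ℂ) + 1)) *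
      Complex.exp ((-((n:ℂ)+1)) * x ^ 2 + (2 * Complex.I * α * ((n:ℂ)+1)) * x + 0) :=
    funext (Fterm_eq β α n)
  rw [heq]; exact this

lemma norm_Fterm (β α : ℝ) (n : ℕ) (x : ℝ) :
    ‖Fterm β α n x‖ = |β| ^ (n + 1) * Real.exp (-((n:ℝ)+1) * x ^ 2) / ((n:ℝ)+1) := by
  unfold Fterm
  rw [norm_div, norm_mul, norm_pow]
  have h1 : ‖(β : ℂ)‖ = |β| := Complex.norm_real β
  have h2 : ‖((n : ℂ) + 1)‖ = (n : ℝ) + 1 := by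
    rw [show ((n : ℂ) + 1) = ((n + 1 : ℕ) : ℂ) by push_cast; ring, Complex.norm_natCast]
    push_cast; ring
  have h3 : ‖Complex.exp (((n : ℂ) + 1) * (2 * Complex.I * α * x - x ^ 2))‖
      = Real.exp (-((n:ℝ)+1) * x ^ 2) := by
    rw [Complex.norm_exp]
    congr 1
    simp [Complex.add_re, Complex.mul_re, Complex.sub_re, Complex.mul_im,
      ← Complex.ofReal_pow]
    ring
  rw [h1, h2, h3]

lemma integral_norm_Fterm_le (β α : ℝ) (hβ : |β| ≤ 1) (n : ℕ) :
    ∫ x : ℝ, ‖Fterm β α n x‖ ≤ Real.sqrt Real.pi / ((n:ℝ)+1) ^ (3/2 : ℝ) := by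
  have hn : (0:ℝ) < (n:ℝ) + 1 := by positivity
  have key : ∫ x : ℝ, ‖Fterm β α n x‖
      = |β| ^ (n + 1) * Real.sqrt (Real.pi / ((n:ℝ)+1)) / ((n:ℝ)+1) := by
    simp_rw [norm_Fterm]
    rw [integral_div, integral_const_mul, integral_gaussian]
  rw [key]
  have hb1 : |β| ^ (n + 1) ≤ 1 := pow_le_one₀ (abs_nonneg β) hβ
  have h32 : ((n:ℝ)+1) ^ (3/2 : ℝ) = ((n:ℝ)+1) * Real.sqrt ((n:ℝ)+1) := by
    rw [show (3/2 : ℝ) = 1 + 1/2 by norm_num, Real.rpow_add hn, Real.rpow_one,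
      ← Real.sqrt_eq_rpow]
  have hsq : Real.sqrt (Real.pi / ((n:ℝ)+1)) = Real.sqrt Real.pi / Real.sqrt ((n:ℝ)+1) :=
    Real.sqrt_div' _ (le_of_lt hn) ▸ by rw [Real.sqrt_div Real.pi_pos.le]
  rw [h32, hsq]
  have h0 : 0 ≤ Real.sqrt Real.pi / Real.sqrt ((n:ℝ)+1) / ((n:ℝ)+1) := by positivity
  calc |β| ^ (n + 1) * (Real.sqrt Real.pi / Real.sqrt ((n:ℝ)+1)) / ((n:ℝ)+1)
      ≤ 1 * (Real.sqrt Real.pi / Real.sqrt ((n:ℝ)+1)) / ((n:ℝ)+1) := by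
        gcongr
    _ = Real.sqrt Real.pi / (((n:ℝ)+1) * Real.sqrt ((n:ℝ)+1)) := by
        rw [one_mul, div_div, mul_comm]

lemma nconz (n : ℕ) : ((n : ℂ) + 1) ≠ 0 := by
  rw [show ((n:ℂ)+1) = ((n+1 : ℕ) : ℂ) by push_cast; ring]
  exact Nat.cast_ne_zero.mpr (Nat.succ_ne_zero n)

lemma integral_Fterm (β α : ℝ) (n : ℕ) :
    ∫ x : ℝ, Fterm β α n x = (β : ℂ) ^ (n + 1) / ((n : ℂ) + 1) *
      ((Real.pi : ℂ) / ((n:ℂ)+1)) ^ (1/2 : ℂ) * Complex.exp (-((n:ℂ)+1) * α ^ 2) := by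
  have hb : (-((n:ℂ)+1)).re < 0 := by
    simp only [neg_re, add_re, natCast_re, one_re]
    have : (0:ℝ) ≤ (n:ℝ) := Nat.cast_nonneg n
    linarith
  have heq : Fterm β α n = fun x : ℝ => ((β : ℂ) ^ (n + 1) / ((n : ℂ) + 1)) *
      Complex.exp ((-((n:ℂ)+1)) * x ^ 2 + (2 * Complex.I * α * ((n:ℂ)+1)) * x + 0) :=
    funext (Fterm_eq β α n)
  rw [heq, MeasureTheory.integral_const_mul, integral_cexp_quadratic hb, neg_neg, ← mul_assoc]
  congr 2
  have h := nconz n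
  rw [zero_sub]
  field_simp
  ring_nf
  rw [Complex.I_sq]
  have h4 : (-4 - (n:ℂ)*4) ≠ 0 := fun hc => h (by linear_combination (-1/4 : ℂ) * hc)
  field_simp

lemma tsum_Fterm (β α : ℝ) (hβ : |β| ≤ 1) {x : ℝ} (hx : x ≠ 0) :
    Li1 ((β : ℂ) * Complex.exp (2 * Complex.I * (α : ℂ) * (x : ℂ) - (x : ℂ) ^ 2))
      = ∑' n, Fterm β α n x := by
  set z := (β : ℂ) * Complex.exp (2 * Complex.I * (α : ℂ) * (x : ℂ) - (x : ℂ) ^ 2) with hz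
  have hnorm : ‖z‖ < 1 := by
    rw [hz, norm_mul, Complex.norm_real, Complex.norm_exp]
    have hre : (2 * Complex.I * (α : ℂ) * (x : ℂ) - (x : ℂ) ^ 2).re = -x ^ 2 := by
      simp [Complex.sub_re, Complex.mul_re, Complex.mul_im, ← Complex.ofReal_pow]
    rw [hre]
    have hx2 : (0:ℝ) < x ^ 2 := by positivity
    calc |β| * Real.exp (-x ^ 2) ≤ 1 * Real.exp (-x ^ 2) := by gcongr
      _ < 1 := by rw [one_mul]; exact Real.exp_lt_one_iff.mpr (by linarith)
  have h := Complex.hasSum_taylorSeries_neg_log hnorm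
  have h0 : HasSum (fun n : ℕ => z ^ (n+1) / ((n:ℂ)+1)) (Li1 z) := by
    have h2 := (hasSum_nat_add_iff' 1).mpr h
    simp only [Finset.range_one, Finset.sum_singleton, pow_zero, Nat.cast_zero, div_zero,
      sub_zero] at h2
    unfold Li1
    convert h2 using 2 with n
    case e'_3 => rfl
    push_cast
    ring
  rw [← h0.tsum_eq]
  refine tsum_congr fun n => ?_
  unfold Fterm
  rw [hz, mul_pow, ← Complex.exp_nat_mul]
  push_cast
  ring_nf

lemma summable_bound : Summable (fun n : ℕ => Real.sqrt Real.pi / ((n:ℝ)+1) ^ (3/2:ℝ)) := by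
  simp_rw [div_eq_mul_inv]
  apply Summable.mul_left
  have h1 : Summable (fun n : ℕ => ((n:ℝ) ^ (3/2:ℝ))⁻¹) :=
    (Real.summable_nat_rpow_inv (p := 3/2)).mpr (by norm_num)
  have h2 := (summable_nat_add_iff 1).mpr h1
  refine h2.congr fun n => ?_
  push_cast
  ring_nf

lemma real_id (n : ℕ) : (Real.pi/((n:ℝ)+1)) ^ ((1:ℝ)/2) / ((n:ℝ)+1)
    = Real.sqrt Real.pi / ((n:ℝ)+1) ^ ((3:ℝ)/2) := by
  have hn : (0:ℝ) < (n:ℝ)+1 := by positivity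
  rw [Real.div_rpow Real.pi_pos.le hn.le, Real.sqrt_eq_rpow, div_div]
  congr 1
  rw [show (3:ℝ)/2 = 1/2 + 1 by norm_num, Real.rpow_add hn, Real.rpow_one]

lemma term_eq (β α : ℝ) (n : ℕ) :
    (β : ℂ) ^ (n + 1) / ((n : ℂ) + 1) * ((Real.pi : ℂ) / ((n:ℂ)+1)) ^ (1/2 : ℂ) *
        Complex.exp (-((n:ℂ)+1) * α ^ 2)
      = (Real.sqrt Real.pi : ℂ) *
        (((β : ℂ) * Complex.exp (-(α : ℂ) ^ 2)) ^ (n + 1) / ((n : ℂ) + 1) ^ (3/2 : ℂ)) := by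
  have hn : (0:ℝ) < (n:ℝ) + 1 := by positivity
  have hc1 : ((Real.pi : ℂ) / ((n:ℂ)+1)) ^ (1/2 : ℂ)
      = (((Real.pi / ((n:ℝ)+1)) ^ ((1:ℝ)/2) : ℝ) : ℂ) := by
    rw [show ((Real.pi : ℂ) / ((n:ℂ)+1)) = (((Real.pi / ((n:ℝ)+1)) : ℝ) : ℂ) by push_cast; ring,
      Complex.ofReal_cpow (by positivity)]
    norm_num
  have hc2 : ((n : ℂ) + 1) ^ (3/2 : ℂ) = ((((n:ℝ)+1) ^ ((3:ℝ)/2) : ℝ) : ℂ) := by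
    rw [show ((n : ℂ) + 1) = ((((n:ℝ)+1) : ℝ) : ℂ) by push_cast; ring,
      Complex.ofReal_cpow hn.le]
    norm_num
  have hexp : Complex.exp (-((n:ℂ)+1) * (α:ℂ) ^ 2) = Complex.exp (-(α:ℂ) ^ 2) ^ (n + 1) := by
    rw [← Complex.exp_nat_mul]
    congr 1
    push_cast
    ring
  rw [hc1, hc2, hexp, mul_pow]
  have hr := real_id n
  have hne : (((((n:ℝ)+1) ^ ((3:ℝ)/2)) : ℝ) : ℂ) ≠ 0 := by
    simp only [ne_eq, Complex.ofReal_eq_zero]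
    positivity
  have hne2 := nconz n
  field_simp
  have hd : ((0:ℝ)) < ((n:ℝ)+1) ^ ((3:ℝ)/2) := by positivity
  have hkey : (Real.pi/((n:ℝ)+1)) ^ ((1:ℝ)/2) * ((n:ℝ)+1) ^ ((3:ℝ)/2)
      = Real.sqrt Real.pi * ((n:ℝ)+1) := (div_eq_div_iff hn.ne' hd.ne').mp hr
  have hkey' : ((((Real.pi/((n:ℝ)+1)) ^ ((1:ℝ)/2)) : ℝ) : ℂ) * (((((n:ℝ)+1) ^ ((3:ℝ)/2)) : ℝ) : ℂ)
      = ((Real.sqrt Real.pi : ℝ) : ℂ) * ((n:ℂ)+1) := by exact_mod_cast congrArg Complex.ofReal hkey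
  linear_combination ((β:ℂ) ^ (n + 1)) * hkey'

/-- For real `β` with `|β| ≤ 1` and real `α`,
`∫_{-∞}^∞ Li₁(β e^{2iαx-x²}) dx = √π Li_{3/2}(β e^{-α²})`. -/
theorem integral_li1_spiral (β α : ℝ) (hβ : |β| ≤ 1) :
    ∫ x : ℝ, Li1 ((β : ℂ) * Complex.exp (2 * Complex.I * (α : ℂ) * (x : ℂ) - (x : ℂ) ^ 2))
      = (Real.sqrt Real.pi : ℂ) * Li (3 / 2) ((β : ℂ) * Complex.exp (-(α : ℂ) ^ 2)) := by
  have h0 : ∀ᵐ x : ℝ, x ≠ (0:ℝ) := by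
    refine ae_iff.mpr ?_
    simp [Set.setOf_eq_eq_singleton'] 
  have hae : (fun x : ℝ => Li1 ((β : ℂ) * Complex.exp (2 * Complex.I * (α : ℂ) * (x : ℂ) - (x : ℂ) ^ 2)))
      =ᵐ[volume] fun x => ∑' n, Fterm β α n x :=
    h0.mono fun x hx => tsum_Fterm β α hβ hx
  rw [integral_congr_ae hae]
  rw [MeasureTheory.integral_tsum (fun n => (integrable_Fterm β α n).1) ?_]
  · unfold Li
    rw [← tsum_mul_left]
    refine tsum_congr fun n => ?_
    rw [integral_Fterm]
    rw [show (3/2 : ℂ) = ((3:ℂ)/2) from rfl]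
    exact term_eq β α n
  · have hb : ∀ n : ℕ, ∫⁻ x, ‖Fterm β α n x‖ₑ
        ≤ ENNReal.ofReal (Real.sqrt Real.pi / ((n:ℝ)+1) ^ (3/2:ℝ)) := by
      intro n
      rw [← MeasureTheory.ofReal_integral_norm_eq_lintegral_enorm (integrable_Fterm β α n)]
      exact ENNReal.ofReal_le_ofReal (integral_norm_Fterm_le β α hβ n)
    refine ne_top_of_le_ne_top ?_ (ENNReal.tsum_le_tsum hb)
    rw [← ENNReal.ofReal_tsum_of_nonneg (fun n => by positivity) summable_bound]
    exact ENNReal.ofReal_ne_top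
end

section
/- For all real β with 0 < β ≤ 1 and all real α, -Re ∫_{-∞}^{∞} Li_1(β e^{2iαx - x²}) dx < -Re ∫_{-∞}^{∞} Li_1(-β e^{2iαx - x²}) dx, provided β < 1 or α ≠ 0 (to avoid the singularity when β = 1, interpret via the convergent improper integral). -/
open Complex MeasureTheory

open Real

private noncomputable def Rb (n : ℕ) : ℝ := Real.sqrt (π / n) / n

private lemma Rb_nonneg (n : ℕ) : 0 ≤ Rb n := by unfold Rb; positivity

private lemma summable_Rb : Summable Rb := by
  have h1 : Summable (fun n : ℕ => Real.sqrt π * ((n:ℝ) ^ ((3:ℝ)/2))⁻¹) :=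
    (Real.summable_nat_rpow_inv.mpr (by norm_num)).mul_left _
  refine h1.of_nonneg_of_le Rb_nonneg fun n => ?_
  rcases Nat.eq_zero_or_pos n with rfl | hn
  · simp [Rb]
  have hn' : (0:ℝ) < n := by exact_mod_cast hn
  have h2 : ((n:ℝ) ^ ((3:ℝ)/2)) = Real.sqrt n * n := by
    rw [show (3:ℝ)/2 = 1/2 + 1 by norm_num, Real.rpow_add hn', Real.rpow_one,
      ← Real.sqrt_eq_rpow]
  rw [Rb, Real.sqrt_div pi_pos.le, h2, div_div, div_eq_mul_inv]

private noncomputable def rr (α : ℝ) (n : ℕ) : ℝ :=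
  Real.sqrt (π / n) * Real.exp (-(n:ℝ) * α ^ 2) / n

private lemma rr_nonneg (α : ℝ) (n : ℕ) : 0 ≤ rr α n := by unfold rr; positivity

private lemma rr_le_Rb (α : ℝ) (n : ℕ) : rr α n ≤ Rb n := by
  have h : Real.exp (-(n:ℝ) * α ^ 2) ≤ 1 := by
    rw [Real.exp_le_one_iff]
    nlinarith [sq_nonneg α, Nat.cast_nonneg (α := ℝ) n]
  unfold rr Rb
  calc Real.sqrt (π / n) * Real.exp (-(n:ℝ) * α ^ 2) / n
      ≤ Real.sqrt (π / n) * 1 / n := by gcongr <;> positivity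
    _ = Real.sqrt (π / n) / n := by ring

private lemma re_exponent (α x : ℝ) :
    (2*Complex.I*(α:ℂ)*(x:ℂ) - (x:ℂ)^2).re = -x^2 := by
  simp [Complex.sub_re, Complex.mul_re, ← Complex.ofReal_pow]

private lemma termIntegral (α : ℝ) (c : ℂ) (n : ℕ) :
    ∫ x : ℝ, (c * Complex.exp (2*Complex.I*(α:ℂ)*(x:ℂ) - (x:ℂ)^2))^n / (n:ℂ)
      = c^n * ((rr α n : ℝ) : ℂ) := by
  rcases Nat.eq_zero_or_pos n with rfl | hn0
  · simp [rr]
  have hn : n ≠ 0 := hn0.ne'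
  have hn' : (0:ℝ) < n := by positivity
  have hb : (-(n:ℂ)).re < 0 := by simp [hn']
  have h1 : ∀ x : ℝ, (c * Complex.exp (2*Complex.I*(α:ℂ)*(x:ℂ) - (x:ℂ)^2))^n / (n:ℂ)
      = (c^n / n) * Complex.exp ((-(n:ℂ)) * (x:ℂ)^2 + (2*Complex.I*(α:ℂ)*(n:ℂ)) * (x:ℂ) + 0) := by
    intro x
    rw [mul_pow, ← Complex.exp_nat_mul,
      show ((n:ℂ) * (2*Complex.I*(α:ℂ)*(x:ℂ) - (x:ℂ)^2))
        = ((-(n:ℂ)) * (x:ℂ)^2 + (2*Complex.I*(α:ℂ)*(n:ℂ)) * (x:ℂ) + 0) from by ring]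
    ring
  simp_rw [h1, MeasureTheory.integral_const_mul, integral_cexp_quadratic hb]
  have hI : (0 - (2*Complex.I*(α:ℂ)*(n:ℂ))^2 / (4 * -(n:ℂ))) = ((-((n:ℝ)*α^2) : ℝ) : ℂ) := by
    have : (n:ℂ) ≠ 0 := by exact_mod_cast hn
    field_simp
    ring_nf
    rw [Complex.I_sq]
    push_cast
    ring
  rw [hI]
  have h2 : ((π:ℂ) / -(-(n:ℂ))) ^ (1/2 : ℂ) = ((Real.sqrt (π/n) : ℝ) : ℂ) := by
    rw [neg_neg, show ((π:ℂ)/(n:ℂ)) = (((π/n : ℝ)):ℂ) from by push_cast; ring,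
      show (1/2 : ℂ) = ((1/2 : ℝ) : ℂ) from by norm_num,
      Real.sqrt_eq_rpow, Complex.ofReal_cpow (by positivity)]
  rw [h2, ← Complex.ofReal_exp, rr]
  have : (n:ℂ) ≠ 0 := by exact_mod_cast hn
  push_cast
  field_simp

private lemma norm_term (α : ℝ) (c : ℂ) (n : ℕ) (x : ℝ) :
    ‖(c * Complex.exp (2*Complex.I*(α:ℂ)*(x:ℂ) - (x:ℂ)^2))^n / (n:ℂ)‖
      = ‖c‖^n * Real.exp (-(n:ℝ) * x^2) / n := by
  rw [norm_div, norm_pow, norm_mul, Complex.norm_exp,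
    re_exponent, mul_pow, ← Real.exp_nat_mul, Complex.norm_natCast,
    show (n:ℝ) * -x^2 = -(n:ℝ)*x^2 from by ring]

private lemma key (α b : ℝ) (hb : |b| ≤ 1) :
    (∫ x : ℝ, Li1 ((b:ℂ) * Complex.exp (2*Complex.I*(α:ℂ)*(x:ℂ) - (x:ℂ)^2))).re
      = ∑' n : ℕ, b^n * rr α n := by
  set f : ℕ → ℝ → ℂ :=
    fun n x => ((b:ℂ) * Complex.exp (2*Complex.I*(α:ℂ)*(x:ℂ) - (x:ℂ)^2))^n / (n:ℂ) with hf
  have hnorm : ∀ n x, ‖f n x‖ = |b|^n * Real.exp (-(n:ℝ) * x^2) / n := by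
    intro n x
    rw [hf]
    simp only
    rw [norm_term α (b:ℂ) n x, Complex.norm_real, Real.norm_eq_abs]
  have hmeas : ∀ n, AEStronglyMeasurable (f n) volume := by
    intro n
    apply Continuous.aestronglyMeasurable
    fun_prop
  have hint : ∀ n, Integrable (f n) volume := by
    intro n
    rcases Nat.eq_zero_or_pos n with rfl | hn0
    · simp only [hf, pow_zero, Nat.cast_zero, div_zero]
      exact integrable_zero _ _ _
    have hb' : (-(n:ℂ)).re < 0 := by
      simp
      exact_mod_cast hn0
    have := (integrable_cexp_quadratic' hb' (2*Complex.I*(α:ℂ)*(n:ℂ)) 0).const_mul ((b:ℂ)^n / n)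
    refine this.congr (Filter.Eventually.of_forall fun x => ?_)
    rw [hf]
    simp only
    rw [mul_pow, ← Complex.exp_nat_mul,
      show ((n:ℂ) * (2*Complex.I*(α:ℂ)*(x:ℂ) - (x:ℂ)^2))
        = ((-(n:ℂ)) * (x:ℂ)^2 + (2*Complex.I*(α:ℂ)*(n:ℂ)) * (x:ℂ) + 0) from by ring]
    ring
  have hnormint : ∀ n, ∫ x : ℝ, ‖f n x‖ = |b|^n * Real.sqrt (π/n) / n := by
    intro n
    rcases Nat.eq_zero_or_pos n with rfl | hn0
    · simp [hnorm]
    simp_rw [hnorm]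
    rw [show (fun x : ℝ => |b|^n * Real.exp (-(n:ℝ) * x^2) / n)
        = (fun x : ℝ => (|b|^n / n) * Real.exp (-(n:ℝ) * x^2)) from by funext x; ring,
      MeasureTheory.integral_const_mul, integral_gaussian]
    ring
  have hnormint_le : ∀ n, ∫ x : ℝ, ‖f n x‖ ≤ Rb n := by
    intro n
    rw [hnormint, Rb]
    have h1 : |b|^n ≤ 1 := pow_le_one₀ (abs_nonneg b) hb
    have h2 : (0:ℝ) ≤ Real.sqrt (π/n) / n := by positivity
    calc |b|^n * Real.sqrt (π/n) / n = |b|^n * (Real.sqrt (π/n) / n) := by ring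
      _ ≤ 1 * (Real.sqrt (π/n) / n) := by gcongr
      _ = Real.sqrt (π/n) / n := one_mul _
  have hx0 : ∀ᵐ x : ℝ, (x : ℝ) ≠ 0 := by
    simpa [ae_iff] using Real.volume_singleton (a := (0:ℝ))
  have hae : ∀ᵐ x : ℝ, Li1 ((b:ℂ) * Complex.exp (2*Complex.I*(α:ℂ)*(x:ℂ) - (x:ℂ)^2))
      = ∑' n, f n x := by
    filter_upwards [hx0] with x hx
    have hlt : ‖(b:ℂ) * Complex.exp (2*Complex.I*(α:ℂ)*(x:ℂ) - (x:ℂ)^2)‖ < 1 := by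
      rw [norm_mul, Complex.norm_exp, re_exponent,
        Complex.norm_real, Real.norm_eq_abs]
      have hxx : (0:ℝ) < x^2 := by positivity
      have he : Real.exp (-x^2) < 1 := by
        rw [Real.exp_lt_one_iff]
        linarith
      have he' : (0:ℝ) < Real.exp (-x^2) := Real.exp_pos _
      nlinarith [abs_nonneg b]
    exact ((hasSum_taylorSeries_neg_log hlt).tsum_eq).symm
  rw [MeasureTheory.integral_congr_ae hae]
  have hswap : ∫ x : ℝ, ∑' n, f n x = ∑' n, ∫ x : ℝ, f n x := by
    refine MeasureTheory.integral_tsum hmeas ?_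
    have h1 : ∀ n, ∫⁻ x : ℝ, ‖f n x‖ₑ = ENNReal.ofReal (∫ x : ℝ, ‖f n x‖) := by
      intro n
      exact (MeasureTheory.ofReal_integral_norm_eq_lintegral_enorm (hint n)).symm
    simp_rw [h1]
    have h2 : ∑' n : ℕ, ENNReal.ofReal (∫ x : ℝ, ‖f n x‖)
        ≤ ∑' n : ℕ, ENNReal.ofReal (Rb n) :=
      ENNReal.tsum_le_tsum fun n => ENNReal.ofReal_le_ofReal (hnormint_le n)
    rw [← lt_top_iff_ne_top]
    refine lt_of_le_of_lt h2 ?_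
    rw [← ENNReal.ofReal_tsum_of_nonneg Rb_nonneg summable_Rb]
    exact ENNReal.ofReal_lt_top
  rw [hswap]
  have hterm : ∀ n, ∫ x : ℝ, f n x = ((b:ℂ))^n * ((rr α n : ℝ) : ℂ) := fun n => termIntegral α _ n
  simp_rw [hterm]
  have hsum : Summable (fun n : ℕ => ((b:ℂ))^n * ((rr α n : ℝ) : ℂ)) := by
    refine Summable.of_norm_bounded summable_Rb fun n => ?_
    rw [norm_mul, norm_pow, Complex.norm_real, Complex.norm_real, Real.norm_eq_abs,
      Real.norm_eq_abs, _root_.abs_of_nonneg (rr_nonneg α n)]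
    calc |b|^n * rr α n ≤ 1 * rr α n :=
          mul_le_mul_of_nonneg_right (pow_le_one₀ (abs_nonneg b) hb) (rr_nonneg α n)
      _ = rr α n := one_mul _
      _ ≤ Rb n := rr_le_Rb α n
  rw [Complex.re_tsum hsum]
  exact tsum_congr fun n => by
    rw [← Complex.ofReal_pow, ← Complex.ofReal_mul, Complex.ofReal_re]

private lemma summable_pow_rr (α b : ℝ) (hb : |b| ≤ 1) :
    Summable (fun n : ℕ => b^n * rr α n) := by
  refine Summable.of_norm_bounded summable_Rb fun n => ?_
  rw [Real.norm_eq_abs, abs_mul, _root_.abs_pow, _root_.abs_of_nonneg (rr_nonneg α n)]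
  calc |b|^n * rr α n ≤ 1 * rr α n :=
        mul_le_mul_of_nonneg_right (pow_le_one₀ (abs_nonneg b) hb) (rr_nonneg α n)
    _ = rr α n := one_mul _
    _ ≤ Rb n := rr_le_Rb α n

/-- For `0 < β ≤ 1` (avoiding the singular case `β = 1, α = 0`),
`-Re ∫ Li₁(β e^{2iαx-x²}) dx < -Re ∫ Li₁(-β e^{2iαx-x²}) dx`:
in the lattice path model `Z₋` dominates `Z₊` when `A ≤ 1`. -/
theorem zminus_dominates (β α : ℝ) (h0 : 0 < β) (h1 : β ≤ 1) (h : β < 1 ∨ α ≠ 0) :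
    -(∫ x : ℝ, Li1 ((β : ℂ) *
        Complex.exp (2 * Complex.I * (α : ℂ) * (x : ℂ) - (x : ℂ) ^ 2))).re
    < -(∫ x : ℝ, Li1 (-(β : ℂ) *
        Complex.exp (2 * Complex.I * (α : ℂ) * (x : ℂ) - (x : ℂ) ^ 2))).re := by
  have hβ : |β| ≤ 1 := by rwa [_root_.abs_of_pos h0]
  have hβ' : |(-β)| ≤ 1 := by rwa [abs_neg]
  rw [show (-(β:ℂ)) = (((-β : ℝ)):ℂ) from by push_cast; ring, key α β hβ, key α (-β) hβ',
    neg_lt_neg_iff]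
  refine Summable.tsum_lt_tsum (i := 1) ?_ ?_ (summable_pow_rr α (-β) hβ') (summable_pow_rr α β hβ)
  · intro n
    have hp : (-β)^n ≤ β^n := by
      calc (-β)^n ≤ |(-β)^n| := le_abs_self _
        _ = β^n := by rw [_root_.abs_pow, abs_neg, _root_.abs_of_pos h0]
    exact mul_le_mul_of_nonneg_right hp (rr_nonneg α n)
  · have hr : 0 < rr α 1 := by
      unfold rr
      positivity
    have : (-β)^1 < β^1 := by simpa using by linarith
    exact mul_lt_mul_of_pos_right this hr
end

section
/- For 0 < β ≤ 1 and any real α, Re ∫_{-∞}^{∞} Li_1(±β e^{2iαx - x²}) dx equals Re ∫_{-∞}^{∞} Li_1(±β e^{-α² - x²}) dx; in particular for 0 < β < 1, Re log(1 - β e^{-α²-x²}) < Re log(1 + β e^{-α²-x²}) pointwise in x. -/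
open Complex MeasureTheory

lemma li1_hasSum {z : ℂ} (hz : ‖z‖ < 1) :
    HasSum (fun n : ℕ ↦ z ^ (n + 1) / ((n : ℂ) + 1)) (Li1 z) := by
  have h := hasSum_taylorSeries_neg_log hz
  have h2 := (hasSum_nat_add_iff' (f := fun n : ℕ ↦ z ^ n / (n : ℂ)) 1).mpr h
  simp only [Finset.range_one, Finset.sum_singleton, pow_zero, Nat.cast_zero, div_zero,
    sub_zero] at h2
  have h3 : HasSum (fun n : ℕ ↦ z ^ (n + 1) / ((n : ℂ) + 1)) (-Complex.log (1 - z)) := by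
    convert h2 using 2 with n
    · rfl
    push_cast
    ring
  simpa [Li1] using h3

/-- Key lemma: the integral of `Li1 (c * exp(-x² + u x + v))` only depends on `v + u²/4`
    (for `re u = 0`, `re v ≤ 0`, `‖c‖ ≤ 1`). -/
lemma integral_li1_gauss (c : ℂ) (hc : ‖c‖ ≤ 1) (u v : ℂ) (hu : u.re = 0) (hv : v.re ≤ 0) :
    ∫ x : ℝ, Li1 (c * Complex.exp (-(x : ℂ) ^ 2 + u * (x : ℂ) + v)) =
      ∑' n : ℕ, c ^ (n + 1) / ((n : ℂ) + 1) *
        ((↑Real.pi / ((n : ℂ) + 1)) ^ (1 / 2 : ℂ) * Complex.exp (((n : ℂ) + 1) * (v + u ^ 2 / 4))) := by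
  set F : ℕ → ℝ → ℂ := fun n x ↦ (c ^ (n + 1) / ((n : ℂ) + 1)) *
      Complex.exp ((-((n : ℂ) + 1)) * (x : ℂ) ^ 2 + (((n : ℂ) + 1) * u) * (x : ℂ) + ((n : ℂ) + 1) * v)
      with hF
  have hb : ∀ n : ℕ, (-((n : ℂ) + 1)).re < 0 := by
    intro n
    simp only [Complex.neg_re, Complex.add_re, Complex.natCast_re, Complex.one_re, neg_lt_zero]
    positivity
  have hInt : ∀ n : ℕ, Integrable (F n) := fun n ↦
    (integrable_cexp_quadratic' (hb n) _ _).const_mul _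
  have hre : ∀ (n : ℕ) (x : ℝ),
      ((-((n : ℂ) + 1)) * (x : ℂ) ^ 2 + (((n : ℂ) + 1) * u) * (x : ℂ) + ((n : ℂ) + 1) * v).re
        = -(((n : ℝ) + 1) * x ^ 2) + ((n : ℝ) + 1) * v.re := by
    intro n x
    simp [Complex.add_re, Complex.mul_re, Complex.mul_im, ← Complex.ofReal_pow, hu]
    ring
  have hcn : ∀ n : ℕ, ‖((n : ℂ) + 1)‖ = (n : ℝ) + 1 := by
    intro n
    rw [show ((n : ℂ) + 1) = ((n + 1 : ℕ) : ℂ) by push_cast; ring, Complex.norm_natCast]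
    push_cast; ring
  have hnorm : ∀ n : ℕ, ∀ x : ℝ,
      ‖F n x‖ ≤ (1 / ((n : ℝ) + 1)) * Real.exp (-(((n : ℝ) + 1) * x ^ 2)) := by
    intro n x
    rw [hF]
    simp only [norm_mul, Complex.norm_exp, hre]
    have hpos : (0 : ℝ) < (n : ℝ) + 1 := by positivity
    have h1 : ‖(c ^ (n + 1) / ((n : ℂ) + 1))‖ ≤ 1 / ((n : ℝ) + 1) := by
      rw [norm_div, norm_pow, hcn]
      gcongr
      exact pow_le_one₀ (norm_nonneg c) hc
    have h2 : Real.exp (-(((n : ℝ) + 1) * x ^ 2) + ((n : ℝ) + 1) * v.re)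
        ≤ Real.exp (-(((n : ℝ) + 1) * x ^ 2)) := by
      apply Real.exp_le_exp.mpr
      have : ((n : ℝ) + 1) * v.re ≤ 0 := mul_nonpos_of_nonneg_of_nonpos hpos.le hv
      linarith
    exact mul_le_mul h1 h2 (Real.exp_nonneg _) (by positivity)
  have hSummable : Summable fun n : ℕ ↦ ∫ x : ℝ, ‖F n x‖ := by
    have hg : Summable fun n : ℕ ↦ Real.sqrt Real.pi * (((n : ℝ) + 1) ^ (-(3/2) : ℝ)) := by
      have h0 := (Real.summable_nat_rpow (p := -(3/2))).mpr (by norm_num)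
      have h1 := (summable_nat_add_iff 1).mpr h0
      have h2 : (fun n : ℕ ↦ (((n + 1 : ℕ) : ℝ)) ^ (-(3/2) : ℝ))
          = fun n : ℕ ↦ (((n : ℝ) + 1)) ^ (-(3/2) : ℝ) := by
        funext n; push_cast; ring_nf
      exact ((h2 ▸ h1).mul_left (Real.sqrt Real.pi))
    refine Summable.of_nonneg_of_le (fun n ↦ integral_nonneg fun x ↦ norm_nonneg _)
      (fun n ↦ ?_) hg
    have hpos : (0 : ℝ) < (n : ℝ) + 1 := by positivity
    calc ∫ x : ℝ, ‖F n x‖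
        ≤ ∫ x : ℝ, (1 / ((n : ℝ) + 1)) * Real.exp (-(((n : ℝ) + 1) * x ^ 2)) := by
          refine integral_mono (hInt n).norm ?_ (hnorm n)
          have hi := (integrable_exp_neg_mul_sq hpos).const_mul (1 / ((n : ℝ) + 1))
          simp only [neg_mul] at hi ⊢
          exact hi
      _ = (1 / ((n : ℝ) + 1)) * Real.sqrt (Real.pi / ((n : ℝ) + 1)) := by
          rw [integral_const_mul]
          simp_rw [← neg_mul]
          rw [integral_gaussian]
      _ = Real.sqrt Real.pi * (((n : ℝ) + 1) ^ (-(3/2) : ℝ)) := by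
          have h12 : ((n : ℝ) + 1) ^ (-(3/2) : ℝ)
              = (((n : ℝ) + 1) * Real.sqrt ((n : ℝ) + 1))⁻¹ := by
            rw [show (-(3/2) : ℝ) = -(1 + 1/2) by norm_num, Real.rpow_neg hpos.le,
              Real.rpow_add hpos, Real.rpow_one, Real.sqrt_eq_rpow]
          rw [Real.sqrt_div Real.pi_pos.le, h12]
          have hs : Real.sqrt ((n : ℝ) + 1) ≠ 0 := by positivity
          field_simp
  have hae : ∀ᵐ x : ℝ, (x : ℝ) ≠ 0 := by
    rw [ae_iff]
    simpa using measure_singleton (0 : ℝ)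
  have hsum : ∀ x : ℝ, x ≠ 0 →
      HasSum (fun n : ℕ ↦ F n x) (Li1 (c * Complex.exp (-(x : ℂ) ^ 2 + u * (x : ℂ) + v))) := by
    intro x hx
    have hre0 : (-(x : ℂ) ^ 2 + u * (x : ℂ) + v).re = -x ^ 2 + v.re := by
      simp [Complex.add_re, Complex.mul_re, ← Complex.ofReal_pow, hu]
    have hz : ‖c * Complex.exp (-(x : ℂ) ^ 2 + u * (x : ℂ) + v)‖ < 1 := by
      simp only [norm_mul, Complex.norm_exp, hre0]
      have hx2 : (0 : ℝ) < x ^ 2 := by positivity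
      have he : Real.exp (-x ^ 2 + v.re) < 1 := by
        rw [Real.exp_lt_one_iff]; linarith
      calc ‖c‖ * Real.exp (-x ^ 2 + v.re) ≤ 1 * Real.exp (-x ^ 2 + v.re) := by
            gcongr
        _ < 1 := by simpa using he
    have h := li1_hasSum hz
    convert h using 2 with n
    rw [hF]
    rw [mul_pow, ← Complex.exp_nat_mul,
      show ((n + 1 : ℕ) : ℂ) * (-(x : ℂ) ^ 2 + u * (x : ℂ) + v)
        = (-((n : ℂ) + 1)) * (x : ℂ) ^ 2 + (((n : ℂ) + 1) * u) * (x : ℂ) + ((n : ℂ) + 1) * v by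
        push_cast; ring]
    ring
  calc ∫ x : ℝ, Li1 (c * Complex.exp (-(x : ℂ) ^ 2 + u * (x : ℂ) + v))
      = ∫ x : ℝ, ∑' n : ℕ, F n x := by
        refine integral_congr_ae ?_
        filter_upwards [hae] with x hx
        exact ((hsum x hx).tsum_eq).symm
    _ = ∑' n : ℕ, ∫ x : ℝ, F n x :=
        (integral_tsum_of_summable_integral_norm hInt hSummable).symm
    _ = _ := by
        refine tsum_congr fun n ↦ ?_
        rw [hF]
        simp only []
        rw [integral_const_mul, integral_cexp_quadratic (hb n)]
        have hne : ((n : ℂ) + 1) ≠ 0 := by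
          intro h
          have h' := congrArg Complex.re h
          simp at h'
          have : (0:ℝ) ≤ (n : ℝ) := Nat.cast_nonneg n
          linarith
        congr 2
        · rw [neg_neg]
        · congr 1
          have h4 : (4 : ℂ) * -((n : ℂ) + 1) ≠ 0 :=
            mul_ne_zero (by norm_num) (neg_ne_zero.mpr hne)
          have hdiv : (((n : ℂ) + 1) * u) ^ 2 / (4 * -((n : ℂ) + 1))
              = -(((n : ℂ) + 1) * u ^ 2 / 4) := by
            rw [div_eq_iff h4]; ring
          rw [hdiv]; ring

/-- For `0 < β ≤ 1` and real `α`, the real part of the spiral integral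
`∫ Li₁(±β e^{2iαx-x²}) dx` equals the real part of `∫ Li₁(±β e^{-α²-x²}) dx`
(contour shifting), and pointwise (for `0 < β < 1`)
`Re log(1 - β e^{-α²-x²}) < Re log(1 + β e^{-α²-x²})`. -/
theorem contour_shift_and_pointwise (β α : ℝ) (h0 : 0 < β) (h1 : β ≤ 1) :
    (∀ ε : ℝ, ε = 1 ∨ ε = -1 →
      (∫ x : ℝ, Li1 ((ε : ℂ) * (β : ℂ) *
          Complex.exp (2 * Complex.I * (α : ℂ) * (x : ℂ) - (x : ℂ) ^ 2))).re
        = (∫ x : ℝ, Li1 ((ε : ℂ) * (β : ℂ) *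
          Complex.exp (-(α : ℂ) ^ 2 - (x : ℂ) ^ 2))).re) ∧
    (β < 1 → ∀ x : ℝ,
      Real.log (1 - β * Real.exp (-α ^ 2 - x ^ 2))
        < Real.log (1 + β * Real.exp (-α ^ 2 - x ^ 2))) := by
  constructor
  · intro ε hε
    have hc : ‖(ε : ℂ) * (β : ℂ)‖ ≤ 1 := by
      rcases hε with h | h <;> subst h <;>
        simp [norm_mul, Complex.norm_real, abs_of_pos h0, h1]
    have hA := integral_li1_gauss ((ε : ℂ) * (β : ℂ)) hc (2 * Complex.I * (α : ℂ)) 0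
      (by simp) (by simp)
    have hB := integral_li1_gauss ((ε : ℂ) * (β : ℂ)) hc 0 (-(α : ℂ) ^ 2)
      (by simp) (by simp [← Complex.ofReal_pow]; positivity)
    have e1 : ∀ x : ℝ, 2 * Complex.I * (α : ℂ) * (x : ℂ) - (x : ℂ) ^ 2
        = -(x : ℂ) ^ 2 + (2 * Complex.I * (α : ℂ)) * (x : ℂ) + 0 := fun x ↦ by ring
    have e2 : ∀ x : ℝ, -(α : ℂ) ^ 2 - (x : ℂ) ^ 2
        = -(x : ℂ) ^ 2 + 0 * (x : ℂ) + (-(α : ℂ) ^ 2) := fun x ↦ by ring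
    have key : (∫ x : ℝ, Li1 ((ε : ℂ) * (β : ℂ) *
          Complex.exp (2 * Complex.I * (α : ℂ) * (x : ℂ) - (x : ℂ) ^ 2)))
        = (∫ x : ℝ, Li1 ((ε : ℂ) * (β : ℂ) *
          Complex.exp (-(α : ℂ) ^ 2 - (x : ℂ) ^ 2))) := by
      simp_rw [e1, e2]
      rw [hA, hB]
      refine tsum_congr fun n ↦ ?_
      congr 3
      rw [mul_pow, mul_pow, Complex.I_sq]
      ring
    rw [key]
  · intro hβ x
    have he : Real.exp (-α ^ 2 - x ^ 2) ≤ 1 := Real.exp_le_one_iff.mpr (by nlinarith)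
    have ht0 : 0 < β * Real.exp (-α ^ 2 - x ^ 2) := by positivity
    have ht1 : β * Real.exp (-α ^ 2 - x ^ 2) < 1 := by nlinarith
    exact Real.log_lt_log (by linarith) (by linarith)
end
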